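/- arXiv:2209.04936 — 3 statements merged into one kernel-verified Lean document; each statement's English description precedes it below -/
import Mathlib

section
/- Let X, Y : ℕ → ℕ be 0/1 sequences supported on {1,…,|X|} and {1,…,|Y|} respectively, and define Ŷ by Ŷ_i = 1 − Y_{|Y|−i+1} for 1 ≤ i ≤ |Y|. Let R be the convolution R_i = Σ_{j, 1 ≤ j ≤ |X|, 1 ≤ i−j ≤ |Y|} X_j · Ŷ_{i−j}. Then for any integer α with 1−|X| ≤ α ≤ |Y|−1, R_{|Y|+1−α} equals the number of indices i with 1 ≤ i ≤ |Y|, 1 ≤ i−α ≤ |X|, Y_i = 0, and X_{i−α} = 1. -/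
/-- The convolution identity behind the `0`-asymmetric-flip-detector: for 0/1 sequences
`X` (supported on `[1, nx]`) and `Y` (supported on `[1, ny]`), with `Ŷ_i = 1 - Y_{ny-i+1}`
and `R` the convolution of `X` and `Ŷ`, the entry `R_{ny+1-α}` counts the indices `i` with
`1 ≤ i ≤ ny`, `1 ≤ i-α ≤ nx`, `Y_i = 0` and `X_{i-α} = 1`. -/
theorem stmt4 (nx ny : ℕ) (hnx : 1 ≤ nx) (hny : 1 ≤ ny)
    (X Y Yhat R : ℤ → ℕ)
    (hX01 : ∀ i, X i ≤ 1) (hY01 : ∀ i, Y i ≤ 1)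
    (hXsupp : ∀ i, X i ≠ 0 → 1 ≤ i ∧ i ≤ (nx : ℤ))
    (hYsupp : ∀ i, Y i ≠ 0 → 1 ≤ i ∧ i ≤ (ny : ℤ))
    (hYhat : ∀ i : ℤ, 1 ≤ i → i ≤ (ny : ℤ) → Yhat i = 1 - Y ((ny : ℤ) - i + 1))
    (hR : ∀ i : ℤ, R i =
      ∑ j ∈ (Finset.Icc (1 : ℤ) (nx : ℤ)).filter
          (fun j => 1 ≤ i - j ∧ i - j ≤ (ny : ℤ)),
        X j * Yhat (i - j)) :
    ∀ α : ℤ, 1 - (nx : ℤ) ≤ α → α ≤ (ny : ℤ) - 1 →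
      R ((ny : ℤ) + 1 - α) =
        ((Finset.Icc (1 : ℤ) (ny : ℤ)).filter
          (fun i => 1 ≤ i - α ∧ i - α ≤ (nx : ℤ) ∧ Y i = 0 ∧ X (i - α) = 1)).card := by
  intro α hα1 hα2
  rw [hR]
  have key : ∀ j ∈ (Finset.Icc (1 : ℤ) (nx : ℤ)).filter
      (fun j => 1 ≤ (ny : ℤ) + 1 - α - j ∧ (ny : ℤ) + 1 - α - j ≤ (ny : ℤ)),
      X j * Yhat ((ny : ℤ) + 1 - α - j) =
        if Y (α + j) = 0 ∧ X j = 1 then 1 else 0 := by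
    intro j hj
    simp only [Finset.mem_filter, Finset.mem_Icc] at hj
    rw [hYhat _ hj.2.1 hj.2.2]
    have h1 : (ny : ℤ) - ((ny : ℤ) + 1 - α - j) + 1 = α + j := by ring
    rw [h1]
    have hx := hX01 j
    have hy := hY01 (α + j)
    interval_cases hX : X j <;> interval_cases hY : Y (α + j) <;> simp
  rw [Finset.sum_congr rfl key, ← Finset.card_filter, Finset.filter_filter]
  apply Finset.card_bij (fun j _ => α + j)
  · intro j hj
    simp only [Finset.mem_filter, Finset.mem_Icc] at hj ⊢
    refine ⟨⟨by omega, by omega⟩, by omega, by omega, hj.2.2.1, by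
      simpa using hj.2.2.2⟩
  · intro j1 h1 j2 h2 h
    omega
  · intro i hi
    simp only [Finset.mem_filter, Finset.mem_Icc] at hi
    refine ⟨i - α, ?_, by ring⟩
    simp only [Finset.mem_filter, Finset.mem_Icc]
    refine ⟨⟨by omega, by omega⟩, ⟨by omega, by omega⟩, ?_, hi.2.2.2.2⟩
    simpa using hi.2.2.2.1
end

section
/- Let k ≥ 2 and r ≥ 1, and for weights w_1,…,w_{k−1} ∈ [0,r] and w_k ∈ [0,r], define subset-sum item weights u_i = (k^{k+1} + k^i)·r + w_i for i < k and u_k = (k^{k+1} + k^k)·r − w_k. Then Σ_{i=1}^k u_i = f^Q(k) := Σ_{i=1}^k (k^{k+1} + k^i)·r if and only if w_1 + w_2 + ⋯ + w_{k−1} − w_k = 0. -/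
/-- Encoding correctness for the k-sum-to-subset-sum reduction: with
`u_i = (k^{k+1}+k^i)·r + w_i` for `i < k` and `u_k = (k^{k+1}+k^k)·r − w_k`
(for weights `w_i ∈ [0,r]`), we have `Σ_{i=1}^k u_i = Σ_{i=1}^k (k^{k+1}+k^i)·r` iff
`w_1 + ⋯ + w_{k−1} = w_k`. -/
theorem stmt10 (k r : ℕ) (hk : 2 ≤ k) (hr : 1 ≤ r) (w u : ℕ → ℕ)
    (hw : ∀ i, 1 ≤ i → i ≤ k → w i ≤ r)
    (hu1 : ∀ i, 1 ≤ i → i ≤ k - 1 → u i = (k ^ (k + 1) + k ^ i) * r + w i)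
    (hu2 : u k = (k ^ (k + 1) + k ^ k) * r - w k) :
    (∑ i ∈ Finset.Icc 1 k, u i = ∑ i ∈ Finset.Icc 1 k, (k ^ (k + 1) + k ^ i) * r) ↔
      ∑ i ∈ Finset.Icc 1 (k - 1), w i = w k := by
  obtain ⟨m, rfl⟩ : ∃ m, k = m + 1 := ⟨k - 1, by omega⟩
  simp only [Nat.add_sub_cancel] at *
  rw [Finset.sum_Icc_succ_top (by omega : 1 ≤ m + 1),
    Finset.sum_Icc_succ_top (by omega : 1 ≤ m + 1), hu2,
    Finset.sum_congr rfl (fun i hi => hu1 i (Finset.mem_Icc.mp hi).1 (Finset.mem_Icc.mp hi).2),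
    Finset.sum_add_distrib]
  have hwk : w (m + 1) ≤ ((m + 1) ^ (m + 1 + 1) + (m + 1) ^ (m + 1)) * r := by
    calc w (m + 1) ≤ r := hw (m + 1) (by omega) le_rfl
    _ ≤ ((m + 1) ^ (m + 1 + 1) + (m + 1) ^ (m + 1)) * r :=
      Nat.le_mul_of_pos_left r (by positivity)
  omega
end

section
/- Let w_1, …, w_n be nonnegative integers and t ≥ 0. If for some weight w there are more than ⌊t/w⌋ items of weight w (with w ≥ 1), then for every target s ≤ t, some subset of items sums to s if and only if some subset of the items obtained by keeping only ⌊t/w⌋ copies of weight w (and all other items) sums to s. -/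
/-- Redundancy elimination in dynamic subset sum: if there are more than `⌊t/v⌋` items of
weight `v ≥ 1` in the multiset `W` of item weights, then for every target `s ≤ t`, some
sub-multiset of `W` sums to `s` iff some sub-multiset of the multiset obtained from `W`
by keeping only `⌊t/v⌋` copies of weight `v` (and all other items) sums to `s`. -/
theorem stmt19 (W : Multiset ℕ) (t v : ℕ) (hv : 1 ≤ v)
    (hcount : t / v < W.count v) :
    ∀ s ≤ t,
      (∃ S ≤ W, S.sum = s) ↔
      (∃ S ≤ W.filter (fun x => x ≠ v) + Multiset.replicate (t / v) v, S.sum = s) := by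
  intro s hs
  constructor
  · rintro ⟨S, hSW, rfl⟩
    refine ⟨S, ?_, rfl⟩
    rw [Multiset.le_iff_count]
    intro x
    rw [Multiset.count_add, Multiset.count_filter, Multiset.count_replicate]
    by_cases hx : x = v
    · subst hx
      simp only [ne_eq, not_true_eq_false, if_false, if_pos rfl, zero_add]
      have hmul : S.count x * x ≤ S.sum := by
        obtain ⟨u, hu⟩ := Multiset.le_iff_exists_add.mp (Multiset.filter_le (· = x) S)
        have h1 : (S.filter (· = x)).sum ≤ S.sum := by
          conv_rhs => rw [hu]
          rw [Multiset.sum_add]; exact Nat.le_add_right _ _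
        rwa [Multiset.filter_eq', Multiset.sum_replicate, smul_eq_mul] at h1
      exact Nat.le_div_iff_mul_le hv |>.mpr (hmul.trans hs)
    · simp only [ne_eq, hx, not_false_eq_true, if_true, if_neg (Ne.symm hx), add_zero]
      exact (Multiset.count_le_of_le x hSW).trans (le_of_eq rfl)
  · rintro ⟨S, hSW, rfl⟩
    refine ⟨S, hSW.trans ?_, rfl⟩
    rw [Multiset.le_iff_count]
    intro x
    rw [Multiset.count_add, Multiset.count_filter, Multiset.count_replicate]
    by_cases hx : x = v
    · subst hx
      simp only [ne_eq, not_true_eq_false, if_false, if_pos rfl, zero_add]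
      exact hcount.le
    · simp [hx, Ne.symm hx]
end
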